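/- Assume (H2) and (H3). Then there exists δ > 0 such that liminf_{|a|→∞} (1/|a|) log φ(a) > δ. -/

import Mathlib

open scoped BigOperators
open Filter

noncomputable section

namespace JumpGenerating

variable {d : ℕ}

/-- Scalar product `a · z` for `a ∈ ℝ^d`, `z ∈ ℤ^d`. -/
def dotZ (a : EuclideanSpace ℝ (Fin d)) (z : Fin d → ℤ) : ℝ := ∑ i, a i * (z i : ℝ)

/-- Scalar product on `ℝ^d`. -/
def dotV (a v : EuclideanSpace ℝ (Fin d)) : ℝ := ∑ i, a i * v i

/-- The jump generating function `φ(a) = ∑_{z ∈ ℤ^d} μ(z) e^{a·z}`. -/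
def phi (μ : (Fin d → ℤ) → ℝ) (a : EuclideanSpace ℝ (Fin d)) : ℝ :=
  ∑' z, μ z * Real.exp (dotZ a z)

/-- (H3): the series defining `φ` converges for every `a ∈ ℝ^d`. -/
def H3 (μ : (Fin d → ℤ) → ℝ) : Prop :=
  ∀ a : EuclideanSpace ℝ (Fin d), Summable fun z => μ z * Real.exp (dotZ a z)

/-- `μ` is a nonnegative measure on `ℤ^d` with `0 < μ(ℤ^d) ≤ 1`. -/
def IsMeasure (μ : (Fin d → ℤ) → ℝ) : Prop :=
  (∀ z, 0 ≤ μ z) ∧ 0 < ∑' z, μ z ∧ ∑' z, μ z ≤ 1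

/-- The filter `‖a‖ → ∞` on `ℝ^d`. -/
def normAtTop (d : ℕ) : Filter (EuclideanSpace ℝ (Fin d)) :=
  comap (fun a : EuclideanSpace ℝ (Fin d) => ‖a‖) atTop

/-- The `n`-step kernel of the homogeneous random walk on `ℤ^d` with step
distribution `μ`. -/
def homN (μ : (Fin d → ℤ) → ℝ) : ℕ → (Fin d → ℤ) → (Fin d → ℤ) → ℝ
  | 0 => fun z z' => if z = z' then 1 else 0
  | n + 1 => fun z z' => ∑' w, homN μ n z w * μ (z' - w)

/-- (H2): the homogeneous random walk with step distribution `μ` is irreducible. -/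
def H2 (μ : (Fin d → ℤ) → ℝ) : Prop := ∀ z z' : Fin d → ℤ, ∃ n, 0 < homN μ n z z'



lemma dotZ_sub (a : EuclideanSpace ℝ (Fin d)) (z w : Fin d → ℤ) :
    dotZ a (z - w) = dotZ a z - dotZ a w := by
  simp only [dotZ, Pi.sub_apply, Int.cast_sub, mul_sub, Finset.sum_sub_distrib]

lemma homN_nonneg (μ : (Fin d → ℤ) → ℝ) (hμ : ∀ z, 0 ≤ μ z) :
    ∀ n z z', 0 ≤ homN μ n z z' := by
  intro n
  induction n with
  | zero => intro z z'; simp only [homN]; split <;> norm_num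
  | succ n ih =>
      intro z z'
      exact tsum_nonneg fun w => mul_nonneg (ih z w) (hμ _)

lemma phi_nonneg (μ : (Fin d → ℤ) → ℝ) (hμ : ∀ z, 0 ≤ μ z) (a : EuclideanSpace ℝ (Fin d)) :
    0 ≤ phi μ a :=
  tsum_nonneg fun z => mul_nonneg (hμ z) (Real.exp_pos _).le

lemma key (μ : (Fin d → ℤ) → ℝ) (hμ : IsMeasure μ) (h3 : H3 μ)
    (a : EuclideanSpace ℝ (Fin d)) :
    ∀ n z, homN μ n 0 z * Real.exp (dotZ a z) ≤ (phi μ a) ^ n := by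
  intro n
  induction n with
  | zero =>
      intro z
      simp only [homN, pow_zero]
      split
      · next h => subst h; simp [dotZ]
      · simp
  | succ n ih =>
      intro z
      have hsum2 : Summable (fun w => μ (z - w) * Real.exp (dotZ a (z - w))) :=
        (Equiv.subLeft z).summable_iff.mpr (h3 a)
      have htsum2 : ∑' w, μ (z - w) * Real.exp (dotZ a (z - w)) = phi μ a := by
        simpa [phi] using (Equiv.subLeft z).tsum_eq (fun u => μ u * Real.exp (dotZ a u))
      have hphin : 0 ≤ (phi μ a) ^ n := pow_nonneg (phi_nonneg μ hμ.1 a) n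
      have hleterm : ∀ w, homN μ n 0 w * μ (z - w) * Real.exp (dotZ a z)
          ≤ (phi μ a) ^ n * (μ (z - w) * Real.exp (dotZ a (z - w))) := by
        intro w
        have hexp : Real.exp (dotZ a z) = Real.exp (dotZ a w) * Real.exp (dotZ a (z - w)) := by
          rw [← Real.exp_add, dotZ_sub]; ring_nf
        calc homN μ n 0 w * μ (z - w) * Real.exp (dotZ a z)
            = (homN μ n 0 w * Real.exp (dotZ a w)) * (μ (z - w) * Real.exp (dotZ a (z - w))) := by
              rw [hexp]; ring
          _ ≤ (phi μ a) ^ n * (μ (z - w) * Real.exp (dotZ a (z - w))) :=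
              mul_le_mul_of_nonneg_right (ih w)
                (mul_nonneg (hμ.1 _) (Real.exp_pos _).le)
      have hR : Summable (fun w => (phi μ a) ^ n * (μ (z - w) * Real.exp (dotZ a (z - w)))) :=
        hsum2.mul_left _
      have hL : Summable (fun w => homN μ n 0 w * μ (z - w) * Real.exp (dotZ a z)) :=
        Summable.of_nonneg_of_le
          (fun w => mul_nonneg (mul_nonneg (homN_nonneg μ hμ.1 n 0 w) (hμ.1 _))
            (Real.exp_pos _).le)
          hleterm hR
      calc homN μ (n + 1) 0 z * Real.exp (dotZ a z)
          = ∑' w, homN μ n 0 w * μ (z - w) * Real.exp (dotZ a z) := by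
            rw [show homN μ (n + 1) 0 z = ∑' w, homN μ n 0 w * μ (z - w) from rfl,
              ← tsum_mul_right]
        _ ≤ ∑' w, (phi μ a) ^ n * (μ (z - w) * Real.exp (dotZ a (z - w))) :=
            Summable.tsum_le_tsum hleterm hL hR
        _ = (phi μ a) ^ n * phi μ a := by rw [tsum_mul_left, htsum2]
        _ = (phi μ a) ^ (n + 1) := by ring

lemma log_bound (μ : (Fin d → ℤ) → ℝ) (hμ : IsMeasure μ) (h3 : H3 μ)
    (a : EuclideanSpace ℝ (Fin d)) (n : ℕ) (z : Fin d → ℤ)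
    (hp : 0 < homN μ n 0 z) :
    Real.log (homN μ n 0 z) + dotZ a z ≤ n * Real.log (phi μ a) := by
  have h1 := key μ hμ h3 a n z
  have h2 : Real.log (homN μ n 0 z * Real.exp (dotZ a z)) ≤ Real.log ((phi μ a) ^ n) :=
    Real.log_le_log (mul_pos hp (Real.exp_pos _)) h1
  rwa [Real.log_mul hp.ne' (Real.exp_pos _).ne', Real.log_exp, Real.log_pow] at h2

lemma exists_big_coord (hd : 1 ≤ d) (a : EuclideanSpace ℝ (Fin d)) :
    ∃ i, ‖a‖ ≤ Real.sqrt d * |a i| := by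
  obtain ⟨i, -, hi⟩ := Finset.exists_max_image Finset.univ (fun j => |a j|)
    ⟨⟨0, hd⟩, Finset.mem_univ _⟩
  refine ⟨i, ?_⟩
  have h1 : ∀ j, ‖a j‖ ^ 2 ≤ |a i| ^ 2 := fun j => by
    rw [Real.norm_eq_abs]
    exact pow_le_pow_left₀ (abs_nonneg _) (hi j (Finset.mem_univ j)) 2
  have h2 : ∑ j, ‖a j‖ ^ 2 ≤ (d : ℝ) * |a i| ^ 2 := by
    calc ∑ j, ‖a j‖ ^ 2 ≤ ∑ _j : Fin d, |a i| ^ 2 := Finset.sum_le_sum fun j _ => h1 j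
      _ = (d : ℝ) * |a i| ^ 2 := by simp [mul_comm]
  calc ‖a‖ = Real.sqrt (∑ j, ‖a j‖ ^ 2) := EuclideanSpace.norm_eq a
    _ ≤ Real.sqrt ((d : ℝ) * |a i| ^ 2) := Real.sqrt_le_sqrt h2
    _ = Real.sqrt d * |a i| := by
        rw [Real.sqrt_mul (Nat.cast_nonneg d), Real.sqrt_sq (abs_nonneg _)]

/-- under (H2) and (H3), there is `δ > 0` with
`liminf_{|a|→∞} log φ(a)/|a| > δ`. -/
theorem log_phi_liminf_pos {d : ℕ} (hd : 1 ≤ d) (μ : (Fin d → ℤ) → ℝ)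
    (hμ : IsMeasure μ) (h2 : H2 μ) (h3 : H3 μ) :
    ∃ δ : ℝ, 0 < δ ∧
      (δ : EReal) < liminf
        (fun a : EuclideanSpace ℝ (Fin d) => ((Real.log (phi μ a) / ‖a‖ : ℝ) : EReal))
        (normAtTop d) := by
  classical
  set e : Fin d → Bool → (Fin d → ℤ) :=
    fun i b j => if j = i then (if b then 1 else -1) else 0 with he
  have he_ne : ∀ i b, (0 : Fin d → ℤ) ≠ e i b := by
    intro i b h
    have h' := congrFun h i
    simp only [he, Pi.zero_apply, if_pos rfl] at h'
    cases b <;> simp_all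
  have hdotZ : ∀ (a : EuclideanSpace ℝ (Fin d)) i b,
      dotZ a (e i b) = a i * (if b then (1 : ℝ) else -1) := by
    intro a i b
    simp only [dotZ, he]
    rw [Finset.sum_eq_single i]
    · cases b <;> simp
    · intro j _ hj; simp [hj]
    · intro h; exact absurd (Finset.mem_univ i) h
  choose nf hnf using fun p : Fin d × Bool => h2 0 (e p.1 p.2)
  have hnf1 : ∀ p : Fin d × Bool, 1 ≤ nf p := by
    intro p
    rcases Nat.eq_zero_or_pos (nf p) with h | h
    · exfalso
      have hp := hnf p
      rw [h] at hp
      simp only [homN, if_neg (he_ne p.1 p.2)] at hp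
      exact lt_irrefl 0 hp
    · exact h
  have hne : (Finset.univ : Finset (Fin d × Bool)).Nonempty :=
    ⟨(⟨0, hd⟩, true), Finset.mem_univ _⟩
  set N : ℕ := Finset.univ.sup nf with hNdef
  have hNf : ∀ p : Fin d × Bool, nf p ≤ N := fun p => Finset.le_sup (Finset.mem_univ p)
  have hN1 : (1 : ℝ) ≤ N := by
    have := le_trans (hnf1 (⟨0, hd⟩, true)) (hNf (⟨0, hd⟩, true))
    exact_mod_cast this
  set C : ℝ := Finset.univ.inf' hne (fun p => homN μ (nf p) 0 (e p.1 p.2)) with hCdef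
  have hC0 : 0 < C := by
    rw [hCdef, Finset.lt_inf'_iff]
    exact fun p _ => hnf p
  have hCle : ∀ p : Fin d × Bool, C ≤ homN μ (nf p) 0 (e p.1 p.2) :=
    fun p => Finset.inf'_le _ (Finset.mem_univ p)
  set s : ℝ := Real.sqrt d with hsdef
  have hs0 : 0 < s := Real.sqrt_pos.mpr (by exact_mod_cast Nat.lt_of_lt_of_le Nat.zero_lt_one hd)
  have hden : (0 : ℝ) < 2 * s * N := by nlinarith
  refine ⟨1 / (4 * s * N), by positivity, ?_⟩
  have hev : ∀ᶠ a in normAtTop d,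
      ((1 / (2 * s * N) : ℝ) : EReal) ≤ ((Real.log (phi μ a) / ‖a‖ : ℝ) : EReal) := by
    have hmem : {a : EuclideanSpace ℝ (Fin d) | 2 * s * (|Real.log C| + 1) + 1 ≤ ‖a‖}
        ∈ normAtTop d := preimage_mem_comap (Ici_mem_atTop _)
    filter_upwards [hmem] with a ha
    rw [EReal.coe_le_coe_iff]
    obtain ⟨i, hia⟩ := exists_big_coord hd a
    rw [← hsdef] at hia
    set b : Bool := decide (0 ≤ a i) with hbdef
    have hdz : dotZ a (e i b) = |a i| := by
      rw [hdotZ a i b]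
      by_cases h : 0 ≤ a i
      · simp [hbdef, h, abs_of_nonneg h]
      · simp [hbdef, h, abs_of_neg (lt_of_not_ge h)]
    have hlb := log_bound μ hμ h3 a (nf (i, b)) (e i b) (hnf (i, b))
    rw [hdz] at hlb
    have habs : -|Real.log C| ≤ Real.log C := neg_abs_le _
    have habs0 : 0 ≤ |Real.log C| := abs_nonneg _
    have h1 : Real.log C + |a i| ≤ (nf (i, b) : ℝ) * Real.log (phi μ a) := by
      have := Real.log_le_log hC0 (hCle (i, b))
      linarith
    have hnorm0 : 0 < ‖a‖ := by nlinarith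
    have hnfN : (nf (i, b) : ℝ) ≤ N := by exact_mod_cast hNf (i, b)
    have hnf1' : (1 : ℝ) ≤ (nf (i, b) : ℝ) := by exact_mod_cast hnf1 (i, b)
    have hL0 : 0 ≤ Real.log (phi μ a) := by
      by_contra h
      push_neg at h
      have h5 : (nf (i, b) : ℝ) * Real.log (phi μ a) ≤ 1 * Real.log (phi μ a) :=
        mul_le_mul_of_nonpos_right hnf1' h.le
      have h6 : |a i| < |Real.log C| := by linarith
      nlinarith [mul_lt_mul_of_pos_left h6 hs0, mul_nonneg hs0.le habs0]
    have hNL : Real.log C + |a i| ≤ (N : ℝ) * Real.log (phi μ a) :=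
      le_trans h1 (mul_le_mul_of_nonneg_right hnfN hL0)
    rw [div_le_div_iff₀ hden hnorm0]
    nlinarith [mul_le_mul_of_nonneg_left hNL (by nlinarith : (0:ℝ) ≤ 2 * s),
      mul_le_mul_of_nonneg_left habs hs0.le]
  have hle : ((1 / (2 * s * N) : ℝ) : EReal) ≤ liminf
      (fun a : EuclideanSpace ℝ (Fin d) => ((Real.log (phi μ a) / ‖a‖ : ℝ) : EReal))
      (normAtTop d) := le_liminf_of_le (by isBoundedDefault) hev
  refine lt_of_lt_of_le ?_ hle
  rw [EReal.coe_lt_coe_iff]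
  rw [div_lt_div_iff₀ (by nlinarith) hden]
  nlinarith

end JumpGenerating
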